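/- Every graph G on n vertices whose girth is at least 2n/3 + 1 contains at most one cycle. -/

import Mathlib

open SimpleGraph

/-- The vertex-deleted subgraph `G - v`: the induced subgraph on the remaining vertices. -/
def deleteVert {V : Type*} (G : SimpleGraph V) (v : V) : SimpleGraph {w : V // w ≠ v} :=
  G.induce {w : V | w ≠ v}

/-- `G` contains a cycle. -/
def HasCycleG {V : Type*} (G : SimpleGraph V) : Prop :=
  ∃ (u : V) (c : G.Walk u u), c.IsCycle

/-- `G` contains at least two distinct cycles (distinct as subgraphs,
i.e. with different edge sets). -/
def TwoCycles {V : Type*} (G : SimpleGraph V) : Prop :=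
  ∃ (u v : V) (c : G.Walk u u) (c' : G.Walk v v),
    c.IsCycle ∧ c'.IsCycle ∧ ¬ (∀ e, e ∈ c.edges ↔ e ∈ c'.edges)

/-- `G` contains exactly one cycle: it has a cycle, and any two cycles are equal
as subgraphs (have the same edge set). -/
def Unicyclic {V : Type*} (G : SimpleGraph V) : Prop :=
  HasCycleG G ∧ ∀ (u v : V) (c : G.Walk u u) (c' : G.Walk v v),
    c.IsCycle → c'.IsCycle → ∀ e, e ∈ c.edges ↔ e ∈ c'.edges

/-- `F` and `G` have at least `k` common cards, i.e. the multiset intersection of their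
decks has size at least `k`: there are `k` distinct vertices of `F` and `k` distinct
vertices of `G` whose corresponding vertex-deleted subgraphs are pairwise isomorphic. -/
def CommonCards {V W : Type*} (F : SimpleGraph V) (G : SimpleGraph W) (k : ℕ) : Prop :=
  ∃ (f : Fin k ↪ V) (g : Fin k ↪ W),
    ∀ i, Nonempty (deleteVert F (f i) ≃g deleteVert G (g i))


private lemma key_stmt6 {V : Type*} [Fintype V] (G : SimpleGraph V)
    (hgirth : ∀ (u : V) (c : G.Walk u u), c.IsCycle →
      2 * (Fintype.card V : ℝ) / 3 + 1 ≤ c.length)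
    {u v : V} (c : G.Walk u u) (c' : G.Walk v v) (hc : c.IsCycle) (hc' : c'.IsCycle)
    {x y : V} (hxy : s(x, y) ∈ c.edges) (hxy' : s(x, y) ∉ c'.edges) : False := by
  classical
  set n := Fintype.card V with hn
  obtain ⟨hadj, hreach⟩ :=
    (adj_and_reachable_delete_edges_iff_exists_cycle (G := G) (v := x) (w := y)).2 ⟨u, c, hc, hxy⟩
  replace hreach : (G \ fromEdgeSet {s(x, y)}).Reachable x y := hreach
  set H : SimpleGraph V := G \ fromEdgeSet {s(x, y)} with hH
  have hle : H ≤ G := sdiff_le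
  have hsub : ∀ {a b : V} (p : H.Walk a b), ∀ e ∈ p.edges, e ∈ G.edgeSet :=
    fun p e he => edgeSet_mono hle (p.edges_subset_edgeSet he)
  have hnotH : s(x, y) ∉ H.edgeSet := by
    simp [hH, edgeSet_sdiff, edgeSet_fromEdgeSet, Set.mem_diff, Sym2.isDiag_iff_proj_eq,
      hadj.ne]
  -- shortest path S from x to y in H
  obtain ⟨S, hSp, hSlen⟩ := hreach.exists_path_of_dist
  set d := H.dist x y with hd
  -- distance lower bound from girth
  have hd1 : 2 * (n : ℝ) / 3 + 1 ≤ (d : ℝ) + 1 := by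
    have hT : ((S.reverse).transfer G (hsub _)).IsPath := hSp.reverse.transfer _
    have hne : s(x, y) ∉ ((S.reverse).transfer G (hsub _)).edges := by
      rw [Walk.edges_transfer]
      intro hmem
      exact hnotH (S.reverse.edges_subset_edgeSet hmem)
    have hcyc : (Walk.cons hadj ((S.reverse).transfer G (hsub _))).IsCycle :=
      (Walk.cons_isCycle_iff _ hadj).2 ⟨hT, hne⟩
    have := hgirth x _ hcyc
    rw [Walk.length_cons, Walk.length_transfer, Walk.length_reverse, hSlen] at this
    push_cast at this ⊢
    linarith
  -- transfer c' into H
  have hce : ∀ e ∈ c'.edges, e ∈ H.edgeSet := by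
    intro e he
    have h1 : e ∈ G.edgeSet := c'.edges_subset_edgeSet he
    have h2 : e ≠ s(x, y) := fun h => hxy' (h ▸ he)
    simp only [hH, edgeSet_sdiff, Set.mem_diff, edgeSet_fromEdgeSet]
    exact ⟨h1, by simp [h2]⟩
  set c2 := c'.transfer H hce with hc2def
  have hc2 : c2.IsCycle := hc'.transfer hce
  have hc2len : c2.length = c'.length := Walk.length_transfer _ _
  set l := c2.length with hl
  have hlg : 2 * (n : ℝ) / 3 + 1 ≤ (l : ℝ) := by
    have h := hgirth v c' hc'
    rw [← hc2len] at h; exact_mod_cast h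
  -- finsets of vertices
  set A := S.support.toFinset with hA
  set B := c2.support.toFinset with hB
  have hAcard : A.card = d + 1 := by
    rw [hA, List.toFinset_card_of_nodup hSp.support_nodup, Walk.length_support, hSlen]
  have hBcard : l ≤ B.card := by
    have hsub' : c2.support.tail.toFinset ⊆ B := fun z hz =>
      List.mem_toFinset.2 (List.mem_of_mem_tail (List.mem_toFinset.1 hz))
    have heq : c2.support.tail.toFinset.card = l := by
      rw [List.toFinset_card_of_nodup hc2.support_nodup, List.length_tail,
        Walk.length_support, hl]
      omega
    calc l = c2.support.tail.toFinset.card := heq.symm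
      _ ≤ B.card := Finset.card_le_card hsub'
  -- distance between two vertices on the cycle c2 is at most l / 2
  have hdistB : ∀ a ∈ c2.support, ∀ b ∈ c2.support, H.dist a b ≤ l / 2 := by
    intro a ha b hb
    have hb' : b ∈ (c2.rotate a ha).support := by
      have h1 : b ∈ ((c2.takeUntil a ha).append (c2.dropUntil a ha)).support := by
        rw [Walk.take_spec]; exact hb
      rw [Walk.mem_support_append_iff] at h1
      rw [Walk.rotate, Walk.mem_support_append_iff]
      tauto
    have hrl : (c2.rotate a ha).length = l := by
      rw [Walk.rotate, Walk.length_append, Nat.add_comm, ← Walk.length_append,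
        Walk.take_spec]
    have hsum : ((c2.rotate a ha).takeUntil b hb').length
        + ((c2.rotate a ha).dropUntil b hb').length = l := by
      rw [← Walk.length_append, Walk.take_spec, hrl]
    have h1 : H.dist a b ≤ ((c2.rotate a ha).takeUntil b hb').length :=
      SimpleGraph.dist_le _
    have h2 : H.dist a b ≤ ((c2.rotate a ha).dropUntil b hb').length := by
      rw [SimpleGraph.dist_comm]
      exact SimpleGraph.dist_le _
    omega
  -- every vertex w on the shortest path S is at position dist x w
  have hpos : ∀ w (hw : w ∈ S.support), S.getVert (H.dist x w) = w := by
    intro w hw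
    have hgen : ∀ (t : H.Walk x w) (dr : H.Walk w y), t.append dr = S →
        S.getVert (H.dist x w) = w := by
      intro t dr hS
      have h3 : t.length + dr.length = S.length := by
        rw [← hS, Walk.length_append]
      have h1 : H.dist x w ≤ t.length := SimpleGraph.dist_le _
      have h2 : H.dist w y ≤ dr.length := SimpleGraph.dist_le _
      have h4 : H.dist x y ≤ H.dist x w + H.dist w y := by
        obtain ⟨p1, -, hp1⟩ := Reachable.exists_path_of_dist ⟨t⟩
        obtain ⟨p2, -, hp2⟩ := Reachable.exists_path_of_dist ⟨dr⟩
        have := SimpleGraph.dist_le (p1.append p2)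
        rwa [Walk.length_append, hp1, hp2] at this
      have heq : H.dist x w = t.length := by
        rw [hSlen] at h3; omega
      rw [heq, ← hS, Walk.getVert_append]
      simp [Walk.getVert_zero]
    exact hgen _ _ (S.take_spec hw)
  -- the intersection is small
  have hTcard : (A ∩ B).card ≤ l / 2 + 1 := by
    rcases (A ∩ B).eq_empty_or_nonempty with hE | hne
    · rw [hE]; simp
    · obtain ⟨w₀, hw₀, hmin⟩ := (A ∩ B).exists_min_image (fun w => H.dist x w) hne
      have hmemA : ∀ w ∈ A ∩ B, w ∈ S.support := fun w hw =>
        List.mem_toFinset.1 (Finset.mem_inter.1 hw).1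
      have hmemB : ∀ w ∈ A ∩ B, w ∈ c2.support := fun w hw =>
        List.mem_toFinset.1 (Finset.mem_inter.1 hw).2
      have hub : ∀ w ∈ A ∩ B, H.dist x w ≤ H.dist x w₀ + l / 2 := by
        intro w hw
        have hrw : H.Reachable w₀ w := by
          have hw₀c : w₀ ∈ c2.support := hmemB _ hw₀
          have hwc : w ∈ c2.support := hmemB _ hw
          have : w ∈ (c2.rotate w₀ hw₀c).support := by
            have h1 : w ∈ ((c2.takeUntil w₀ hw₀c).append (c2.dropUntil w₀ hw₀c)).support := by
              rw [Walk.take_spec]; exact hwc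
            rw [Walk.mem_support_append_iff] at h1
            rw [Walk.rotate, Walk.mem_support_append_iff]
            tauto
          exact ⟨(c2.rotate w₀ hw₀c).takeUntil w this⟩
        obtain ⟨p1, -, hp1⟩ := Reachable.exists_path_of_dist ⟨S.takeUntil w₀ (hmemA _ hw₀)⟩
        obtain ⟨p2, -, hp2⟩ := Reachable.exists_path_of_dist hrw
        have h5 := SimpleGraph.dist_le (p1.append p2)
        rw [Walk.length_append, hp1, hp2] at h5
        have h6 : H.dist w₀ w ≤ l / 2 := hdistB _ (hmemB _ hw₀) _ (hmemB _ hw)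
        omega
      have hinj : ∀ w ∈ A ∩ B, ∀ w' ∈ A ∩ B,
          H.dist x w = H.dist x w' → w = w' := by
        intro w hw w' hw' hEq
        rw [← hpos w (hmemA _ hw), ← hpos w' (hmemA _ hw'), hEq]
      calc (A ∩ B).card
          ≤ (Finset.Icc (H.dist x w₀) (H.dist x w₀ + l / 2)).card := by
            apply Finset.card_le_card_of_injOn (fun w => H.dist x w)
            · intro w hw
              simp only [Finset.coe_Icc, Set.mem_Icc, Finset.mem_coe, Finset.mem_Icc]
              exact ⟨hmin w hw, hub w hw⟩
            · intro w hw w' hw' hEq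
              exact hinj w hw w' hw' hEq
        _ = l / 2 + 1 := by rw [Nat.card_Icc]; omega
  -- final counting
  have hunion : (A ∪ B).card ≤ n := Finset.card_le_univ _
  have hcards : A.card + B.card = (A ∪ B).card + (A ∩ B).card :=
    (Finset.card_union_add_card_inter A B).symm
  have hnat : d + 1 + l ≤ n + (l / 2 + 1) := by omega
  have hcast : (d : ℝ) + 1 + l ≤ (n : ℝ) + ((l / 2 : ℕ) : ℝ) + 1 := by
    exact_mod_cast hnat
  have hhalf : ((l / 2 : ℕ) : ℝ) ≤ (l : ℝ) / 2 := by
    exact_mod_cast Nat.cast_div_le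
  linarith

theorem stmt6 {V : Type*} [Fintype V] (G : SimpleGraph V)
    (hgirth : ∀ (u : V) (c : G.Walk u u), c.IsCycle →
      2 * (Fintype.card V : ℝ) / 3 + 1 ≤ c.length) :
    ∀ (u v : V) (c : G.Walk u u) (c' : G.Walk v v),
      c.IsCycle → c'.IsCycle → ∀ e, e ∈ c.edges ↔ e ∈ c'.edges := by
  classical
  intro u v c c' hc hc' e
  induction e with
  | _ x y =>
    constructor
    · intro h1
      by_contra h2
      exact key_stmt6 G hgirth c c' hc hc' h1 h2
    · intro h1
      by_contra h2
      exact key_stmt6 G hgirth c' c hc' hc h1 h2
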